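/- Let {P_t} be a stochastically continuous Markov semigroup on C_b(H) with generator (K, D(K)). Then K is π-closed: if φ_n ∈ D(K), φ_n → φ pointwise with sup_n ‖φ_n‖_∞ < ∞, and Kφ_n → g pointwise with sup_n ‖Kφ_n‖_∞ < ∞, for some φ, g ∈ C_b(H), then φ ∈ D(K) and Kφ = g. -/

import Mathlib

open MeasureTheory Filter Topology
set_option linter.unusedSectionVars false

variable {H : Type*} [NormedAddCommGroup H] [InnerProductSpace ℝ H] [CompleteSpace H]
  [TopologicalSpace.SeparableSpace H] [MeasurableSpace H] [BorelSpace H]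

/-- The Markov semigroup `P_t φ(x) = ∫ φ(y) π_t(x, dy)` associated to transition
kernels `π`. -/
noncomputable def Pt (π : ℝ → H → Measure H) (t : ℝ) (φ : H → ℝ) (x : H) : ℝ :=
  ∫ y, φ y ∂(π t x)

/-- Membership `φ ∈ D(K)` with `K φ = g`, for the infinitesimal generator `(K, D(K))`
of the semigroup `P_t`: `φ, g` are bounded and uniformly continuous,
`(P_t φ(x) - φ(x))/t → g(x)` pointwise as `t → 0⁺`, and the difference quotients are
uniformly bounded for `t ∈ (0,1)`. -/
def MemDomK (π : ℝ → H → Measure H) (φ g : H → ℝ) : Prop :=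
  UniformContinuous φ ∧ (∃ C, ∀ x, |φ x| ≤ C) ∧
  UniformContinuous g ∧ (∃ C, ∀ x, |g x| ≤ C) ∧
  (∀ x, Tendsto (fun t => (Pt π t φ x - φ x) / t) (𝓝[>] (0:ℝ)) (𝓝 (g x))) ∧
  (∃ C, ∀ t ∈ Set.Ioo (0:ℝ) 1, ∀ x, |Pt π t φ x - φ x| / t ≤ C)

/-- Hypotheses making `π` the kernels of a stochastically continuous Markov semigroup. -/
def IsMarkovSemigroup (π : ℝ → H → Measure H) : Prop :=
  (∀ t x, IsProbabilityMeasure (π t x)) ∧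
  (∀ Γ : Set H, MeasurableSet Γ → Measurable (fun p : ℝ × H => π p.1 p.2 Γ)) ∧
  (∀ t s : ℝ, 0 ≤ t → 0 ≤ s → ∀ x, ∀ Γ : Set H, MeasurableSet Γ →
    π (t + s) x Γ = ∫⁻ y, π s y Γ ∂(π t x)) ∧
  (∀ x, π 0 x = Measure.dirac x) ∧
  (∀ φ : H → ℝ, UniformContinuous φ → (∃ C, ∀ x, |φ x| ≤ C) →
    ∀ x, ContinuousOn (fun t => Pt π t φ x) (Set.Ici 0))

section Aux

variable {π : ℝ → H → Measure H}

lemma integrable_of_bdd {ν : Measure H} [IsFiniteMeasure ν] {φ : H → ℝ} {C : ℝ}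
    (hφm : AEStronglyMeasurable φ ν) (hC : ∀ x, |φ x| ≤ C) : Integrable φ ν :=
  Integrable.mono' (integrable_const C) hφm
    (ae_of_all _ fun x => by simpa [Real.norm_eq_abs] using hC x)

lemma Pt_eq_lintegral {ν : Measure H} [IsProbabilityMeasure ν] {φ : H → ℝ} {C : ℝ}
    (hφm : Measurable φ) (hC : ∀ x, |φ x| ≤ C) :
    ∫ y, φ y ∂ν = (∫⁻ y, ENNReal.ofReal (φ y + C) ∂ν).toReal - C := by
  have h1 : ∫ y, (φ y + C) ∂ν = (∫⁻ y, ENNReal.ofReal (φ y + C) ∂ν).toReal := by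
    apply integral_eq_lintegral_of_nonneg_ae
    · refine ae_of_all _ fun x => ?_
      simp only [Pi.zero_apply]
      linarith [(abs_le.1 (hC x)).1]
    · exact (hφm.add_const C).aestronglyMeasurable
  have h2 : ∫ y, (φ y + C) ∂ν = (∫ y, φ y ∂ν) + C := by
    rw [integral_add (integrable_of_bdd hφm.aestronglyMeasurable hC) (integrable_const C),
      integral_const]
    simp
  linarith

lemma lintegral_ofReal_le {ν : Measure H} [IsProbabilityMeasure ν] {φ : H → ℝ} {C : ℝ}
    (hC : ∀ x, |φ x| ≤ C) :
    ∫⁻ y, ENNReal.ofReal (φ y + C) ∂ν ≤ ENNReal.ofReal (2 * C) := by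
  calc ∫⁻ y, ENNReal.ofReal (φ y + C) ∂ν
      ≤ ∫⁻ _, ENNReal.ofReal (2 * C) ∂ν :=
        lintegral_mono fun y => ENNReal.ofReal_le_ofReal (by linarith [(abs_le.1 (hC y)).2])
    _ = ENNReal.ofReal (2 * C) := by simp [lintegral_const, measure_univ]

lemma measurable_pi_fun
    (hmeas : ∀ Γ : Set H, MeasurableSet Γ → Measurable (fun p : ℝ × H => π p.1 p.2 Γ))
    (s : ℝ) : Measurable fun x => π s x :=
  Measure.measurable_of_measurable_coe _ fun Γ hΓ =>
    (hmeas Γ hΓ).comp (measurable_const.prodMk measurable_id)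

lemma measurable_Pt
    (hmeas : ∀ Γ : Set H, MeasurableSet Γ → Measurable (fun p : ℝ × H => π p.1 p.2 Γ))
    (hprob : ∀ t x, IsProbabilityMeasure (π t x))
    {φ : H → ℝ} {C : ℝ} (hφm : Measurable φ) (hC : ∀ x, |φ x| ≤ C) (s : ℝ) :
    Measurable fun x => Pt π s φ x := by
  have hrw : (fun x => Pt π s φ x)
      = fun x => (∫⁻ y, ENNReal.ofReal (φ y + C) ∂(π s x)).toReal - C := by
    funext x
    have := hprob s x
    exact Pt_eq_lintegral hφm hC
  rw [hrw]
  exact (((Measure.measurable_lintegral ((hφm.add_const C).ennreal_ofReal)).comp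
    (measurable_pi_fun hmeas s)).ennreal_toReal).sub measurable_const

lemma abs_Pt_le (hprob : ∀ t x, IsProbabilityMeasure (π t x))
    {φ : H → ℝ} {C : ℝ} (hC : ∀ x, |φ x| ≤ C) (s : ℝ) (x : H) :
    |Pt π s φ x| ≤ C := by
  have := hprob s x
  have h := norm_integral_le_of_norm_le_const (μ := π s x) (f := φ) (C := C)
    (ae_of_all _ fun y => by simpa [Real.norm_eq_abs] using hC y)
  simpa [Pt, Real.norm_eq_abs, measure_univ] using h

lemma Pt_zero (h0 : ∀ x, π 0 x = Measure.dirac x) {φ : H → ℝ} (hφm : Measurable φ) (x : H) :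
    Pt π 0 φ x = φ x := by
  rw [Pt, h0, integral_dirac' _ _ hφm.stronglyMeasurable]

lemma Pt_semigroup (hM : IsMarkovSemigroup π) {φ : H → ℝ} {C : ℝ}
    (hφm : Measurable φ) (hC : ∀ x, |φ x| ≤ C) {t s : ℝ} (ht : 0 ≤ t) (hs : 0 ≤ s) (x : H) :
    Pt π (t + s) φ x = ∫ y, Pt π s φ y ∂(π t x) := by
  obtain ⟨hprob, hmeas, hCK, h0, hcont⟩ := hM
  have hC0 : 0 ≤ C := (abs_nonneg _).trans (hC x)
  have hπs := measurable_pi_fun hmeas s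
  have hbind : (π t x).bind (fun y => π s y) = π (t + s) x := by
    ext Γ hΓ
    rw [Measure.bind_apply hΓ hπs.aemeasurable, hCK t s ht hs x Γ hΓ]
  set h : H → ENNReal := fun y => ENNReal.ofReal (φ y + C) with hh
  have hhm : Measurable h := (hφm.add_const C).ennreal_ofReal
  have hL : Measurable fun y => ∫⁻ z, h z ∂(π s y) :=
    (Measure.measurable_lintegral hhm).comp hπs
  have hLbound : ∀ y, ∫⁻ z, h z ∂(π s y) ≤ ENNReal.ofReal (2 * C) := fun y => by
    have := hprob s y
    exact lintegral_ofReal_le hC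
  have key : ∫⁻ z, h z ∂(π (t + s) x) = ∫⁻ y, ∫⁻ z, h z ∂(π s y) ∂(π t x) := by
    rw [← hbind, Measure.lintegral_bind hπs.aemeasurable hhm.aemeasurable]
  have h1 : Pt π (t + s) φ x = (∫⁻ z, h z ∂(π (t + s) x)).toReal - C := by
    have := hprob (t + s) x
    exact Pt_eq_lintegral hφm hC
  have h2 : ∀ y, Pt π s φ y = (∫⁻ z, h z ∂(π s y)).toReal - C := fun y => by
    have := hprob s y
    exact Pt_eq_lintegral hφm hC
  have := hprob t x
  have hint : Integrable (fun y => (∫⁻ z, h z ∂(π s y)).toReal) (π t x) := by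
    apply integrable_of_bdd (C := 2 * C) hL.ennreal_toReal.aestronglyMeasurable
    intro y
    rw [abs_of_nonneg ENNReal.toReal_nonneg]
    calc (∫⁻ z, h z ∂(π s y)).toReal
        ≤ (ENNReal.ofReal (2 * C)).toReal :=
          ENNReal.toReal_mono ENNReal.ofReal_ne_top (hLbound y)
      _ ≤ 2 * C := by rw [ENNReal.toReal_ofReal (by linarith)]
  have h3 : ∫ y, Pt π s φ y ∂(π t x)
      = (∫⁻ y, ∫⁻ z, h z ∂(π s y) ∂(π t x)).toReal - C := by
    simp_rw [h2]
    rw [integral_sub hint (integrable_const C), integral_const]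
    congr 1
    · exact integral_toReal hL.aemeasurable
        (ae_of_all _ fun y => lt_of_le_of_lt (hLbound y) ENNReal.ofReal_lt_top)
    · simp
  rw [h1, key, h3]

/-- FTC identity: for `φ ∈ D(K)` with `Kφ = g`, `P_t φ(x) - φ(x) = ∫_0^t P_s g(x) ds`. -/
lemma ftc_identity (hM : IsMarkovSemigroup π) {φ g : H → ℝ} (hd : MemDomK π φ g)
    (x : H) {t : ℝ} (ht : 0 ≤ t) :
    Pt π t φ x - φ x = ∫ s in (0:ℝ)..t, Pt π s g x := by
  obtain ⟨hprob, hmeas, hCK, h0, hcont⟩ := id hM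
  obtain ⟨hφuc, ⟨Cφ, hCφ⟩, hguc, ⟨Cg, hCg⟩, hlim, ⟨Cq, hCq⟩⟩ := hd
  have hφm : Measurable φ := hφuc.continuous.measurable
  have hgm : Measurable g := hguc.continuous.measurable
  set F : ℝ → ℝ := fun s => Pt π s φ x with hF
  set G : ℝ → ℝ := fun s => Pt π s g x with hG
  have hFcont : ContinuousOn F (Set.Icc 0 t) :=
    (hcont φ hφuc ⟨Cφ, hCφ⟩ x).mono Set.Icc_subset_Ici_self
  have hGcont : ContinuousOn G (Set.Ici 0) := hcont g hguc ⟨Cg, hCg⟩ x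
  have hGint : IntervalIntegrable G volume 0 t := by
    apply ContinuousOn.intervalIntegrable
    rw [Set.uIcc_of_le ht]
    exact hGcont.mono Set.Icc_subset_Ici_self
  have hderiv : ∀ s ∈ Set.Ioo 0 t, HasDerivWithinAt F (G s) (Set.Ioi s) s := by
    intro s hs
    have hmain : Tendsto (fun h => (F (s + h) - F s) / h) (𝓝[>] (0:ℝ)) (𝓝 (G s)) := by
      have := hprob s x
      have heq : ∀ᶠ h in 𝓝[>] (0:ℝ),
          (∫ y, (Pt π h φ y - φ y) / h ∂(π s x)) = (F (s + h) - F s) / h := by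
        filter_upwards [self_mem_nhdsWithin] with h hh
        have hh' : (0:ℝ) < h := hh
        have hsg : F (s + h) = ∫ y, Pt π h φ y ∂(π s x) :=
          Pt_semigroup hM hφm hCφ hs.1.le hh'.le x
        have hFs : F s = ∫ y, φ y ∂(π s x) := rfl
        have hint1 : Integrable (fun y => Pt π h φ y) (π s x) :=
          integrable_of_bdd (measurable_Pt hmeas hprob hφm hCφ h).aestronglyMeasurable
            (fun y => abs_Pt_le hprob hCφ h y)
        have hint2 : Integrable φ (π s x) :=
          integrable_of_bdd hφm.aestronglyMeasurable hCφ
        rw [hsg, hFs, ← integral_sub hint1 hint2, ← integral_div]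
      have hDCT : Tendsto (fun h => ∫ y, (Pt π h φ y - φ y) / h ∂(π s x)) (𝓝[>] (0:ℝ))
          (𝓝 (∫ y, g y ∂(π s x))) := by
        apply tendsto_integral_filter_of_dominated_convergence (fun _ => Cq)
        · filter_upwards [self_mem_nhdsWithin] with h hh
          exact (((measurable_Pt hmeas hprob hφm hCφ h).sub hφm).div_const h).aestronglyMeasurable
        · filter_upwards [Ioo_mem_nhdsGT_of_mem
            (Set.mem_Ico.2 ⟨le_refl (0:ℝ), zero_lt_one⟩)] with h hh
          exact ae_of_all _ fun y => by
            have := hCq h hh y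
            rwa [Real.norm_eq_abs, abs_div, abs_of_pos hh.1]
        · exact integrable_const _
        · exact ae_of_all _ fun y => hlim y
      exact (hDCT.congr' heq)
    rw [hasDerivWithinAt_iff_tendsto_slope]
    have hset : Set.Ioi s \ {s} = Set.Ioi s := by
      rw [Set.diff_singleton_eq_self]
      simp
    rw [hset]
    have hsub : Tendsto (fun u => u - s) (𝓝[>] s) (𝓝[>] (0:ℝ)) := by
      apply tendsto_nhdsWithin_of_tendsto_nhds_of_eventually_within
      · have : Tendsto (fun u : ℝ => u - s) (𝓝 s) (𝓝 (s - s)) :=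
          (continuous_id.sub continuous_const).tendsto s
        rw [sub_self] at this
        exact this.mono_left nhdsWithin_le_nhds
      · exact eventually_nhdsWithin_of_forall fun u hu => by
          simp only [Set.mem_Ioi] at hu ⊢
          linarith
    have := (hmain.comp hsub)
    apply this.congr
    intro u
    simp only [Function.comp_apply, slope_def_field]
    rw [add_sub_cancel]
  have hmain := intervalIntegral.integral_eq_sub_of_hasDeriv_right_of_le ht hFcont hderiv hGint
  rw [hmain]
  have hF0 : F 0 = φ x := Pt_zero h0 hφm x
  rw [hF0]

end Aux

/-- the generator `K` is π-closed: if `φ_n ∈ D(K)`, `φ_n → φ` pointwise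
with uniformly bounded sup norms, and `K φ_n → g` pointwise with uniformly bounded sup
norms, where `φ, g ∈ C_b(H)`, then `φ ∈ D(K)` and `K φ = g`. -/
theorem generator_pi_closed
    (π : ℝ → H → Measure H) (hMarkov : IsMarkovSemigroup π)
    (φseq gseq : ℕ → H → ℝ) (φ g : H → ℝ)
    (hdom : ∀ n, MemDomK π (φseq n) (gseq n))
    (hφptw : ∀ x, Tendsto (fun n => φseq n x) atTop (𝓝 (φ x)))
    (hφbdd : ∃ C, ∀ n x, |φseq n x| ≤ C)
    (hgptw : ∀ x, Tendsto (fun n => gseq n x) atTop (𝓝 (g x)))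
    (hgbdd : ∃ C, ∀ n x, |gseq n x| ≤ C)
    (hφ : UniformContinuous φ) (hφb : ∃ C, ∀ x, |φ x| ≤ C)
    (hg : UniformContinuous g) (hgb : ∃ C, ∀ x, |g x| ≤ C) :
    MemDomK π φ g := by
  obtain ⟨hprob, hmeas, hCK, h0, hcont⟩ := id hMarkov
  obtain ⟨Cφ, hCφ⟩ := hφbdd
  obtain ⟨Cg, hCg⟩ := hgbdd
  obtain ⟨Cg', hCg'⟩ := id hgb
  have hgm : Measurable g := hg.continuous.measurable
  have hφm : Measurable φ := hφ.continuous.measurable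
  have hφnm : ∀ n, Measurable (φseq n) := fun n => (hdom n).1.continuous.measurable
  have hgnm : ∀ n, Measurable (gseq n) := fun n => (hdom n).2.2.1.continuous.measurable
  -- the key identity for the limit functions
  have hkey : ∀ x : H, ∀ t : ℝ, 0 ≤ t →
      Pt π t φ x - φ x = ∫ s in (0:ℝ)..t, Pt π s g x := by
    intro x t ht
    have hn : ∀ n, Pt π t (φseq n) x - φseq n x = ∫ s in (0:ℝ)..t, Pt π s (gseq n) x :=
      fun n => ftc_identity hMarkov (hdom n) x ht
    have hL : Tendsto (fun n => Pt π t (φseq n) x - φseq n x) atTop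
        (𝓝 (Pt π t φ x - φ x)) := by
      have := hprob t x
      refine Tendsto.sub ?_ (hφptw x)
      apply tendsto_integral_filter_of_dominated_convergence (fun _ => Cφ)
      · exact Eventually.of_forall fun n => (hφnm n).aestronglyMeasurable
      · exact Eventually.of_forall fun n =>
          ae_of_all _ fun y => by simpa [Real.norm_eq_abs] using hCφ n y
      · exact integrable_const _
      · exact ae_of_all _ fun y => hφptw y
    have hR : Tendsto (fun n => ∫ s in (0:ℝ)..t, Pt π s (gseq n) x) atTop
        (𝓝 (∫ s in (0:ℝ)..t, Pt π s g x)) := by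
      apply intervalIntegral.tendsto_integral_filter_of_dominated_convergence (fun _ => Cg)
      · refine Eventually.of_forall fun n => ?_
        have : ContinuousOn (fun s => Pt π s (gseq n) x) (Set.Ici 0) :=
          hcont (gseq n) (hdom n).2.2.1 (hdom n).2.2.2.1 x
        apply ContinuousOn.aestronglyMeasurable (this.mono ?_) measurableSet_uIoc
        rw [Set.uIoc_of_le ht]
        exact fun s hs => le_of_lt hs.1
      · exact Eventually.of_forall fun n =>
          ae_of_all _ fun s _ => by
            simpa [Real.norm_eq_abs] using abs_Pt_le hprob (hCg n) s x
      · exact intervalIntegrable_const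
      · refine ae_of_all _ fun s hs => ?_
        have := hprob s x
        apply tendsto_integral_filter_of_dominated_convergence (fun _ => Cg)
        · exact Eventually.of_forall fun n => (hgnm n).aestronglyMeasurable
        · exact Eventually.of_forall fun n =>
            ae_of_all _ fun y => by simpa [Real.norm_eq_abs] using hCg n y
        · exact integrable_const _
        · exact ae_of_all _ fun y => hgptw y
    have := hR.congr' (Eventually.of_forall fun n => (hn n).symm)
    exact tendsto_nhds_unique hL this
  refine ⟨hφ, hφb, hg, hgb, ?_, ?_⟩
  · -- pointwise convergence of the difference quotients to g
    intro x
    set G : ℝ → ℝ := fun s => Pt π s g x with hGdef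
    have hGcont : ContinuousOn G (Set.Ici 0) := hcont g hg ⟨Cg', hCg'⟩ x
    have hG0 : G 0 = g x := Pt_zero h0 hgm x
    have hΦ : HasDerivWithinAt (fun u => ∫ s in (0:ℝ)..u, G s) (G 0) (Set.Ici 0) 0 := by
      apply intervalIntegral.integral_hasDerivWithinAt_right (t := Set.Ioi 0)
        IntervalIntegrable.refl
      · exact ⟨Set.Ioi 0, self_mem_nhdsWithin,
          ((hGcont.mono Set.Ioi_subset_Ici_self).aestronglyMeasurable measurableSet_Ioi)⟩
      · exact (hGcont 0 (Set.self_mem_Ici)).mono Set.Ioi_subset_Ici_self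
    rw [hG0] at hΦ
    have hslope := hasDerivWithinAt_iff_tendsto_slope.mp hΦ
    rw [Set.Ici_sdiff_left] at hslope
    apply hslope.congr'
    filter_upwards [self_mem_nhdsWithin] with u hu
    have hu' : (0:ℝ) < u := hu
    rw [slope_def_field, intervalIntegral.integral_same, sub_zero, sub_zero,
      ← hkey x u hu'.le]
  · -- uniform bound on the difference quotients
    refine ⟨Cg', fun t ht x => ?_⟩
    rw [hkey x t ht.1.le]
    have hb : ‖∫ s in (0:ℝ)..t, Pt π s g x‖ ≤ Cg' * |t - 0| := by
      apply intervalIntegral.norm_integral_le_of_norm_le_const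
      intro s hs
      simpa [Real.norm_eq_abs] using abs_Pt_le hprob hCg' s x
    rw [Real.norm_eq_abs, sub_zero, abs_of_pos ht.1] at hb
    rw [div_le_iff₀ ht.1]
    calc |∫ s in (0:ℝ)..t, Pt π s g x| ≤ Cg' * t := hb
      _ = Cg' * t := rfl
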